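/- For the λ-ring ℤ with all Adams operations equal to the identity, the group of λ-derivations (functions f : ℕ⁺ → ℤ with f(p) ∈ pℤ for every prime p and f(mn) = f(m) + f(n) for all m, n ≥ 1) modulo λ-inner derivations (which are all zero) is isomorphic to the product ∏_p pℤ over all primes p, via f ↦ (f(p))_p. Equivalently, H¹_λ(ℤ) ≅ ∏_p ℤ. -/

import Mathlib

noncomputable def Fval (g : {p : ℕ+ // (p : ℕ).Prime} → ℤ) (n : ℕ+) : ℤ :=
  (n : ℕ).factorization.sum fun p k =>
    (k : ℤ) * (if h : p.Prime then g ⟨⟨p, h.pos⟩, h⟩ else 0)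

lemma Fval_one (g : {p : ℕ+ // (p : ℕ).Prime} → ℤ) : Fval g 1 = 0 := by
  simp [Fval]

lemma Fval_mul (g : {p : ℕ+ // (p : ℕ).Prime} → ℤ) (m n : ℕ+) :
    Fval g (m * n) = Fval g m + Fval g n := by
  unfold Fval
  rw [PNat.mul_coe, Nat.factorization_mul m.ne_zero n.ne_zero]
  rw [Finsupp.sum_add_index]
  · intro p _; simp
  · intro p _ k l; push_cast; ring

lemma Fval_prime (g : {p : ℕ+ // (p : ℕ).Prime} → ℤ) (p : ℕ+) (hp : (p : ℕ).Prime) :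
    Fval g p = g ⟨p, hp⟩ := by
  unfold Fval
  rw [hp.factorization, Finsupp.sum_single_index (by simp)]
  have : (⟨(p : ℕ), hp.pos⟩ : ℕ+) = p := by ext; rfl
  simp [hp, this]

lemma eq_Fval (f : ℕ+ → ℤ) (hf : ∀ m n : ℕ+, f (m * n) = f m + f n) (n : ℕ+) :
    f n = Fval (fun p => f p.1) n := by
  have f1 : f 1 = 0 := by have := hf 1 1; simpa using this
  induction n using PNat.strongInductionOn with
  | _ n ih =>
    rcases eq_or_ne n 1 with rfl | hn
    · rw [f1, Fval_one]
    · set p : ℕ := (n : ℕ).minFac with hpdef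
      have hp : p.Prime := Nat.minFac_prime (by
        intro h; exact hn (PNat.coe_injective (by simpa using h)))
      obtain ⟨m, hm⟩ := (n : ℕ).minFac_dvd
      have hm0 : 0 < m := by
        rcases Nat.eq_zero_or_pos m with h | h
        · exfalso; simp [h] at hm
        · exact h
      set P : ℕ+ := ⟨p, hp.pos⟩
      set M : ℕ+ := ⟨m, hm0⟩
      have hnPM : n = P * M := PNat.coe_injective (by rw [PNat.mul_coe]; exact hm)
      have hMlt : M < n := by
        have h2 := hp.two_le
        have : (M : ℕ) < (n : ℕ) := by
          show m < (n : ℕ); rw [hm]; nlinarith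
        exact_mod_cast this
      rw [hnPM, hf P M, ih M hMlt, Fval_mul, Fval_prime _ P hp]

/-- for the λ-ring `ℤ` (all Adams operations equal the identity), every
λ-inner derivation is zero, and the group of λ-derivations — functions `f : ℕ⁺ → ℤ`
with `f(p) ∈ pℤ` for every prime `p` and `f(mn) = f(m) + f(n)` — maps bijectively onto
`∏_p pℤ` via `f ↦ (f(p))_p`.  Hence `H¹_λ(ℤ) ≅ ∏_p pℤ ≅ ∏_p ℤ`. -/
theorem H1_of_Z :
    (∀ (g : ℤ →+ ℤ) (n : ℕ+),
        (AddMonoidHom.id ℤ).comp g - g.comp (AddMonoidHom.id ℤ) = 0) ∧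
    Function.Bijective
      (fun (f : {f : ℕ+ → ℤ // (∀ p : ℕ+, (p : ℕ).Prime → ((p : ℕ) : ℤ) ∣ f p) ∧
          ∀ m n : ℕ+, f (m * n) = f m + f n})
        (p : {p : ℕ+ // (p : ℕ).Prime}) =>
        (⟨f.1 p.1, f.2.1 p.1 p.2⟩ : {x : ℤ // ((p.1 : ℕ) : ℤ) ∣ x})) ∧
    Nonempty ({f : ℕ+ → ℤ // (∀ p : ℕ+, (p : ℕ).Prime → ((p : ℕ) : ℤ) ∣ f p) ∧
          ∀ m n : ℕ+, f (m * n) = f m + f n}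
        ≃ ({p : ℕ+ // (p : ℕ).Prime} → ℤ)) := by
  have hbij : Function.Bijective
      (fun (f : {f : ℕ+ → ℤ // (∀ p : ℕ+, (p : ℕ).Prime → ((p : ℕ) : ℤ) ∣ f p) ∧
          ∀ m n : ℕ+, f (m * n) = f m + f n})
        (p : {p : ℕ+ // (p : ℕ).Prime}) =>
        (⟨f.1 p.1, f.2.1 p.1 p.2⟩ : {x : ℤ // ((p.1 : ℕ) : ℤ) ∣ x})) := by
    constructor
    · rintro ⟨f₁, hd₁, ha₁⟩ ⟨f₂, hd₂, ha₂⟩ h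
      have hprime : ∀ p : {p : ℕ+ // (p : ℕ).Prime}, f₁ p.1 = f₂ p.1 := by
        intro p
        have := congrFun h p
        simpa using congrArg Subtype.val this
      apply Subtype.ext
      funext n
      show f₁ n = f₂ n
      rw [eq_Fval f₁ ha₁ n, eq_Fval f₂ ha₂ n]
      congr 1
      ext p
      exact hprime p
    · intro x
      set g : {p : ℕ+ // (p : ℕ).Prime} → ℤ := fun p => (x p).1 with hg
      have hdvd : ∀ p : ℕ+, (p : ℕ).Prime → ((p : ℕ) : ℤ) ∣ Fval g p := by
        intro p hp
        rw [Fval_prime g p hp]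
        exact (x ⟨p, hp⟩).2
      refine ⟨⟨Fval g, hdvd, Fval_mul g⟩, ?_⟩
      funext p
      apply Subtype.ext
      show Fval g p.1 = (x p).1
      rw [Fval_prime g p.1 p.2]
  refine ⟨fun g n => by simp, hbij, ?_⟩
  have e1 := Equiv.ofBijective _ hbij
  have e2 : ∀ p : {p : ℕ+ // (p : ℕ).Prime}, {x : ℤ // ((p.1 : ℕ) : ℤ) ∣ x} ≃ ℤ := by
    intro p
    have hpne : ((p.1 : ℕ) : ℤ) ≠ 0 := by
      exact_mod_cast p.2.pos.ne'
    exact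
      { toFun := fun x => x.1 / ((p.1 : ℕ) : ℤ)
        invFun := fun y => ⟨((p.1 : ℕ) : ℤ) * y, dvd_mul_right _ _⟩
        left_inv := fun x => Subtype.ext (Int.mul_ediv_cancel' x.2)
        right_inv := fun y => Int.mul_ediv_cancel_left y hpne }
  exact ⟨e1.trans (Equiv.piCongrRight e2)⟩
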